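/- Let k ≥ 2 be an integer and q ≥ 2 an integer. Define w(n) = ∑ μ(a), where the sum runs over all pairs of positive integers (a, b) with a^k·b = n such that every prime factor of a divides q and every prime factor of b divides q. There exists a constant C > 0 (depending only on q and k) such that for all real x ≥ 2, ∑_{n ≤ x} |w(n)| ≤ C·x^{1/k}·(log x)^{π(q)}, where π(q) is the number of primes at most q. -/

import Mathlib

open Complex Finset
open scoped Classical

/-- `w(n) = ∑ μ(a)` over pairs `(a,b)` of positive integers with `a^k b = n`, every prime
factor of `a` dividing `q` and every prime factor of `b` dividing `q`; the Dirichlet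
convolution of `ν·1_N` with `1_N`, where `N = {n : p ∣ n → p ∣ q}`. -/
noncomputable def wcoef (q k n : ℕ) : ℤ :=
  ∑ a ∈ n.divisors,
    if a ^ k ∣ n ∧ (∀ p : ℕ, p.Prime → p ∣ a → p ∣ q) ∧
        (∀ p : ℕ, p.Prime → p ∣ n / a ^ k → p ∣ q)
    then ArithmeticFunction.moebius a else 0

/-- Count of `q`-smooth numbers up to `x` is at most `(2/log 2)^π(q) * (log x)^π(q)`. -/
lemma smooth_count_le (q : ℕ) (hq : 2 ≤ q) (x : ℝ) (hx : 2 ≤ x) :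
    ((((Finset.Icc 1 ⌊x⌋₊).filter fun b => ∀ p : ℕ, p.Prime → p ∣ b → p ∣ q).card : ℝ))
      ≤ (2 / Real.log 2) ^ q.primeCounting * Real.log x ^ q.primeCounting := by
  have hx0 : (0:ℝ) < x := by linarith
  set M := ⌊Real.logb 2 x⌋₊ with hM
  have hcard : ((Finset.Icc 1 ⌊x⌋₊).filter fun b => ∀ p : ℕ, p.Prime → p ∣ b → p ∣ q).card
      ≤ ((q+1).primesBelow.pi fun _ => Finset.range (M+1)).card := by
    apply Finset.card_le_card_of_injOn (fun b => fun p _ => b.factorization p)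
    · intro b hb
      simp only [Finset.mem_coe, Finset.mem_filter, Finset.mem_Icc] at hb
      obtain ⟨⟨hb1, hbN⟩, hsm⟩ := hb
      rw [Finset.mem_coe, Finset.mem_pi]
      intro p hp
      rw [Finset.mem_range, Nat.lt_succ_iff]
      have hpp : p.Prime := Nat.prime_of_mem_primesBelow hp
      set e := b.factorization p with he
      have hdvd : p ^ e ∣ b := Nat.ordProj_dvd b p
      have h2e : 2 ^ e ≤ b := le_trans (Nat.pow_le_pow_left hpp.two_le e) (Nat.le_of_dvd (by omega) hdvd)
      have hbx : (b : ℝ) ≤ x := le_trans (Nat.cast_le.mpr hbN) (Nat.floor_le hx0.le)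
      have h2ex : (2:ℝ) ^ (e:ℝ) ≤ x := by
        rw [Real.rpow_natCast]
        calc ((2:ℝ))^e = ((2^e : ℕ) : ℝ) := by push_cast; ring
        _ ≤ (b:ℝ) := Nat.cast_le.mpr h2e
        _ ≤ x := hbx
      have : (e : ℝ) ≤ Real.logb 2 x := by
        rw [Real.le_logb_iff_rpow_le one_lt_two hx0]
        exact h2ex
      exact Nat.le_floor this
    · intro b1 hb1 b2 hb2 h
      simp only [Finset.mem_coe, Finset.mem_filter, Finset.mem_Icc] at hb1 hb2
      have hb1ne : b1 ≠ 0 := by omega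
      have hb2ne : b2 ≠ 0 := by omega
      apply Nat.factorization_inj hb1ne hb2ne
      ext p
      by_cases hp : p ∈ (q+1).primesBelow
      · exact congrFun (congrFun h p) hp
      · have hz : ∀ b : ℕ, (∀ r : ℕ, r.Prime → r ∣ b → r ∣ q) → b.factorization p = 0 := by
          intro b hsm
          by_contra hne
          have hmem : p ∈ b.primeFactors := by
            rw [← Nat.support_factorization]; exact Finsupp.mem_support_iff.mpr hne
          have hpp : p.Prime := Nat.prime_of_mem_primeFactors hmem
          have hpb : p ∣ b := Nat.dvd_of_mem_primeFactors hmem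
          have : p ∣ q := hsm p hpp hpb
          exact hp (Nat.mem_primesBelow.mpr ⟨by have := Nat.le_of_dvd (by omega) this; omega, hpp⟩)
        rw [hz b1 hb1.2, hz b2 hb2.2]
  have hpicard : (((q+1).primesBelow.pi fun _ => Finset.range (M+1)).card : ℕ)
      = (M+1) ^ q.primeCounting := by
    rw [Finset.card_pi, Finset.prod_const, Finset.card_range,
      Nat.primesBelow_card_eq_primeCounting']
    rfl
  have hlogb1 : (1:ℝ) ≤ Real.logb 2 x := by
    rw [show (1:ℝ) = Real.logb 2 2 by simp]
    exact Real.logb_le_logb_of_le (by norm_num) (by norm_num) hx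
  have hMle : ((M:ℝ) + 1) ≤ 2 / Real.log 2 * Real.log x := by
    have h1 : (M:ℝ) ≤ Real.logb 2 x := Nat.floor_le (by linarith)
    have : (M:ℝ) + 1 ≤ 2 * Real.logb 2 x := by linarith
    calc ((M:ℝ)+1) ≤ 2 * Real.logb 2 x := this
    _ = 2 / Real.log 2 * Real.log x := by rw [Real.logb]; ring
  calc ((((Finset.Icc 1 ⌊x⌋₊).filter fun b => ∀ p : ℕ, p.Prime → p ∣ b → p ∣ q).card : ℝ))
      ≤ (((M+1) ^ q.primeCounting : ℕ) : ℝ) := by exact_mod_cast hpicard ▸ hcard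
    _ = ((M:ℝ)+1) ^ q.primeCounting := by push_cast; ring
    _ ≤ (2 / Real.log 2 * Real.log x) ^ q.primeCounting :=
        pow_le_pow_left₀ (by positivity) hMle _
    _ = (2 / Real.log 2) ^ q.primeCounting * Real.log x ^ q.primeCounting := mul_pow _ _ _

/-- `∑_{n ≤ x} |w(n)| ≪_{q,k} x^{1/k} (log x)^{π(q)}`. -/
theorem sum_abs_wcoef (k : ℕ) (hk : 2 ≤ k) (q : ℕ) (hq : 2 ≤ q) :
    ∃ C : ℝ, 0 < C ∧ ∀ x : ℝ, 2 ≤ x →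
      ∑ n ∈ Finset.Icc 1 ⌊x⌋₊, |(wcoef q k n : ℝ)|
        ≤ C * x ^ (1 / (k : ℝ)) * Real.log x ^ q.primeCounting := by
  refine ⟨(2 / Real.log 2) ^ q.primeCounting, by positivity, ?_⟩
  intro x hx
  have hx0 : (0:ℝ) < x := by linarith
  set N := ⌊x⌋₊ with hN
  set F : ℕ → Finset ℕ := fun n => n.divisors.filter fun a =>
    a ^ k ∣ n ∧ (∀ p : ℕ, p.Prime → p ∣ a → p ∣ q) ∧
      (∀ p : ℕ, p.Prime → p ∣ n / a ^ k → p ∣ q) with hF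
  set A := ⌊x ^ (1 / (k:ℝ))⌋₊ with hA
  set S := (Finset.Icc 1 N).filter fun b => ∀ p : ℕ, p.Prime → p ∣ b → p ∣ q with hS
  -- step 1
  have step1 : ∀ n : ℕ, |(wcoef q k n : ℝ)| ≤ ((F n).card : ℝ) := by
    intro n
    have hZ : |wcoef q k n| ≤ ((F n).card : ℤ) := by
      rw [wcoef, ← Finset.sum_filter]
      refine (Finset.abs_sum_le_sum_abs _ _).trans ?_
      calc ∑ a ∈ F n, |ArithmeticFunction.moebius a| ≤ ∑ a ∈ F n, 1 :=
            Finset.sum_le_sum fun a _ => ArithmeticFunction.abs_moebius_le_one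
        _ = ((F n).card : ℤ) := by simp
    calc |(wcoef q k n : ℝ)| = ((|wcoef q k n| : ℤ) : ℝ) := by push_cast; ring
      _ ≤ ((F n).card : ℝ) := by exact_mod_cast hZ
  -- step 2: sum of cards = card of sigma
  have step2 : ∑ n ∈ Finset.Icc 1 N, (F n).card = ((Finset.Icc 1 N).sigma F).card :=
    (Finset.card_sigma _ _).symm
  -- step 3: inject sigma into S ×ˢ Icc 1 A
  have step3 : ((Finset.Icc 1 N).sigma F).card ≤ (S ×ˢ Finset.Icc 1 A).card := by
    apply Finset.card_le_card_of_injOn (fun p => (p.1 / p.2 ^ k, p.2))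
    · rintro ⟨n, a⟩ hp
      simp only [Finset.mem_coe, Finset.mem_sigma, Finset.mem_Icc, hF, Finset.mem_filter,
        Nat.mem_divisors] at hp
      obtain ⟨⟨hn1, hnN⟩, ⟨han, hn0⟩, hak, hsa, hsb⟩ := hp
      have ha0 : 0 < a := Nat.pos_of_dvd_of_pos han (by omega)
      have hakn : a ^ k ≤ n := Nat.le_of_dvd (by omega) hak
      have hb0 : 0 < n / a ^ k := Nat.div_pos hakn (by positivity)
      simp only [Finset.mem_coe, Finset.mem_product, hS, Finset.mem_filter, Finset.mem_Icc]
      refine ⟨⟨⟨hb0, ?_⟩, hsb⟩, ha0, ?_⟩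
      · exact le_trans (Nat.div_le_self _ _) hnN
      · -- a ≤ A
        apply Nat.le_floor
        have hkne : (k:ℝ) ≠ 0 := by positivity
        have hax : ((a:ℝ)) ^ (k:ℕ) ≤ x := by
          calc ((a:ℝ))^k = ((a^k : ℕ) : ℝ) := by push_cast; ring
            _ ≤ (n:ℝ) := Nat.cast_le.mpr hakn
            _ ≤ x := le_trans (Nat.cast_le.mpr hnN) (Nat.floor_le hx0.le)
        calc (a:ℝ) = (((a:ℝ) ^ (k:ℕ)) ^ (1/(k:ℝ)) : ℝ) := by
              rw [← Real.rpow_natCast (a:ℝ) k, ← Real.rpow_mul (by positivity),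
                mul_one_div, div_self hkne, Real.rpow_one]
          _ ≤ x ^ (1/(k:ℝ)) := Real.rpow_le_rpow (by positivity) hax (by positivity)
    · rintro ⟨n1, a1⟩ h1 ⟨n2, a2⟩ h2 heq
      simp only [Finset.mem_coe, Finset.mem_sigma, hF, Finset.mem_filter,
        Nat.mem_divisors] at h1 h2
      simp only [Prod.mk.injEq] at heq
      obtain ⟨hb, ha⟩ := heq
      subst ha
      have hn1 : n1 = a1 ^ k * (n1 / a1 ^ k) := (Nat.mul_div_cancel' h1.2.2.1).symm
      have hn2 : n2 = a1 ^ k * (n2 / a1 ^ k) := (Nat.mul_div_cancel' h2.2.2.1).symm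
      have : n1 = n2 := by rw [hn1, hn2, hb]
      subst this
      rfl
  -- combine
  have hScard : (S.card : ℝ) ≤ (2 / Real.log 2) ^ q.primeCounting * Real.log x ^ q.primeCounting :=
    smooth_count_le q hq x hx
  have hAle : (A : ℝ) ≤ x ^ (1/(k:ℝ)) := Nat.floor_le (by positivity)
  calc ∑ n ∈ Finset.Icc 1 N, |(wcoef q k n : ℝ)|
      ≤ ∑ n ∈ Finset.Icc 1 N, ((F n).card : ℝ) := Finset.sum_le_sum fun n _ => step1 n
    _ = (((Finset.Icc 1 N).sigma F).card : ℝ) := by rw [← step2]; push_cast; ring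
    _ ≤ ((S ×ˢ Finset.Icc 1 A).card : ℝ) := Nat.cast_le.mpr step3
    _ = (S.card : ℝ) * (A : ℝ) := by rw [Finset.card_product]; push_cast [Nat.card_Icc]; ring
    _ ≤ ((2 / Real.log 2) ^ q.primeCounting * Real.log x ^ q.primeCounting) * x ^ (1/(k:ℝ)) := by
        have hlog : 0 < Real.log x := Real.log_pos (by linarith)
        exact mul_le_mul hScard hAle (by positivity)
          (mul_nonneg (by positivity) (pow_nonneg hlog.le _))
    _ = (2 / Real.log 2) ^ q.primeCounting * x ^ (1/(k:ℝ)) * Real.log x ^ q.primeCounting := by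
        ring
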